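/- In an mzip commutative Bezout ring, every dense maximal ideal contains a regular element. -/

import Mathlib

def IsDense {R : Type*} [CommRing R] (I : Ideal R) : Prop :=
  ∀ x : R, (∀ y ∈ I, x * y = 0) → x = 0
def IsMzip (R : Type*) [CommRing R] : Prop :=
  ∀ M : Ideal R, M.IsMaximal → IsDense M →
    ∃ J : Ideal R, J.FG ∧ J ≤ M ∧ IsDense J

theorem stmt2 (R : Type*) [CommRing R] [IsBezout R] (h : IsMzip R)
    (M : Ideal R) (hM : M.IsMaximal) (hd : IsDense M) :
    ∃ a ∈ M, a ∈ nonZeroDivisors R := by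
  obtain ⟨J, hfg, hJM, hJd⟩ := h M hM hd
  obtain ⟨a, ha⟩ := (IsBezout.isPrincipal_of_FG J hfg)
  refine ⟨a, hJM ?_, ?_⟩
  · rw [ha]; exact Ideal.subset_span (Set.mem_singleton a)
  · rw [mem_nonZeroDivisors_iff_right]
    intro x hx
    apply hJd
    intro y hy
    rw [ha] at hy
    obtain ⟨c, rfl⟩ := Ideal.mem_span_singleton'.mp hy
    rw [show x * (c * a) = c * (x * a) by ring, hx, mul_zero]
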